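/- Let P be a broadcast protocol and let ρ = (G_i)_{0 ≤ i ≤ n} be an execution of the reconfigurable broadcast network defined by P, and let N₀ be the number of nodes of G_0. Then there exists an execution ρ' = (G'_j)_{0 ≤ j ≤ m} starting from the same configuration G_0 such that: every reconfiguration step of ρ' satisfies d(G'_j, G'_{j+1}) ≤ N₀; the last step of ρ' (if ρ' has at least one step) is a communication step; and for every state q ∈ Q, the number of nodes labelled q in the last configuration G'_m equals the number of nodes labelled q in G_n. -/

import Mathlib

/-!
Reconfigurable broadcast networks (Maubert–Pinchinat–Schlehuber-Caissier style
formalization of "Reconfiguration and message losses in parameterized broadcast networks").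

A broadcast protocol is a tuple (Q, I, Σ, Δ); configurations are finite
Q-labelled simple graphs; steps are reconfiguration steps (labels unchanged,
edges arbitrary) or communication steps (edges unchanged, one node broadcasts,
its neighbours receive); executions strictly alternate the two kinds of steps.
-/

namespace RBN

/-- An action of a broadcast protocol: broadcast `!!m` or reception `??m`. -/
inductive BAct (M : Type) where
  | brd : M → BAct M
  | rcv : M → BAct M

/-- A broadcast protocol `(Q, I, Σ, Δ)` with state space `Q` and message alphabet `M`:
initial states `init ⊆ Q` and transition relation `trans ⊆ Q × BAct M × Q`. -/
structure BroadcastProtocol (Q M : Type) where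
  init : Set Q
  trans : Q → BAct M → Q → Prop

/-- A configuration: an undirected graph without self-loops on node set `V`,
whose nodes are labelled by states in `Q`. -/
structure Config (V Q : Type) where
  graph : SimpleGraph V
  label : V → Q

/-- The distance `d(G, G')` between two configurations on the same node set with
the same labelling: the number of edges in the symmetric difference of the edge sets. -/
noncomputable def dist {V Q : Type} (G G' : Config V Q) : ℕ :=
  (symmDiff G.graph.edgeSet G'.graph.edgeSet).ncard

/-- The number of edges incident to node `v` in the symmetric difference of
the edge sets of `G` and `G'`. -/
noncomputable def localDist {V Q : Type} (v : V) (G G' : Config V Q) : ℕ :=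
  {e ∈ symmDiff G.graph.edgeSet G'.graph.edgeSet | v ∈ e}.ncard

/-- A reconfiguration step: labels are unchanged and edges may change arbitrarily. -/
def ReconfStep {V Q : Type} (G G' : Config V Q) : Prop :=
  G'.label = G.label

/-- A communication step: edges are unchanged, some node `v` broadcasts a message `m`
(performing a transition `(L v, !!m, L' v) ∈ Δ`), every neighbour `u` of `v` receives it
(performing `(L u, ??m, L' u) ∈ Δ`), and every other node keeps its label. -/
def CommStep {V Q M : Type} (P : BroadcastProtocol Q M) (G G' : Config V Q) : Prop :=
  G'.graph = G.graph ∧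
  ∃ (v : V) (m : M),
    P.trans (G.label v) (.brd m) (G'.label v) ∧
    (∀ u, G.graph.Adj v u → P.trans (G.label u) (.rcv m) (G'.label u)) ∧
    (∀ u, u ≠ v → ¬ G.graph.Adj v u → G'.label u = G.label u)

/-- The type of a step: communication or reconfiguration. -/
inductive StepType where
  | comm : StepType
  | reconf : StepType
deriving DecidableEq

/-- An execution of length `r` of the reconfigurable broadcast network defined by `P`,
with node set `V`: a sequence of configurations `cfg 0, …, cfg r` together with a
classification `ty` of each step, such that each step is of its declared kind and
communication and reconfiguration steps strictly alternate (reconfiguration steps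
may be trivial). -/
structure Execution {Q M : Type} (V : Type) (P : BroadcastProtocol Q M) (r : ℕ) where
  cfg : ℕ → Config V Q
  ty : ℕ → StepType
  step_comm : ∀ i < r, ty i = .comm → CommStep P (cfg i) (cfg (i + 1))
  step_reconf : ∀ i < r, ty i = .reconf → ReconfStep (cfg i) (cfg (i + 1))
  alternate : ∀ i, i + 1 < r → ty (i + 1) ≠ ty i

variable {Q M V : Type} {P : BroadcastProtocol Q M} {r : ℕ}

/-- An execution is initial if every node of its first configuration is labelled
by an initial state. -/
def Execution.Initial (ρ : Execution V P r) : Prop :=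
  ∀ v, (ρ.cfg 0).label v ∈ P.init

/-- An execution synchronizes in `F` if every node of its last configuration is
labelled by a state in `F`. -/
def Execution.Synchronizes (ρ : Execution V P r) (F : Set Q) : Prop :=
  ∀ v, (ρ.cfg r).label v ∈ F

/-- An execution is `k`-constrained if every reconfiguration step changes at most
`k` edges. -/
def Execution.KConstrained (k : ℕ) (ρ : Execution V P r) : Prop :=
  ∀ i < r, ρ.ty i = .reconf → dist (ρ.cfg i) (ρ.cfg (i + 1)) ≤ k

/-- An execution is strongly `k`-constrained if every reconfiguration step changes
exactly `k` edges. -/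
def Execution.StronglyKConstrained (k : ℕ) (ρ : Execution V P r) : Prop :=
  ∀ i < r, ρ.ty i = .reconf → dist (ρ.cfg i) (ρ.cfg (i + 1)) = k

/-- An execution is `k`-locally-constrained if, at every step and for every node `v`,
at most `k` edges incident to `v` belong to the symmetric difference of the edge sets. -/
def Execution.LocallyConstrained (k : ℕ) (ρ : Execution V P r) : Prop :=
  ∀ (v : V), ∀ i < r, localDist v (ρ.cfg i) (ρ.cfg (i + 1)) ≤ k

/-- An execution is `f`-constrained if every reconfiguration step changes at most
`f n` edges, where `n` is the number of nodes. -/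
def Execution.FConstrained [Fintype V] (f : ℕ → ℕ) (ρ : Execution V P r) : Prop :=
  ∀ i < r, ρ.ty i = .reconf → dist (ρ.cfg i) (ρ.cfg (i + 1)) ≤ f (Fintype.card V)

/-- The number of communication steps of an execution. -/
def Execution.nbcomm (ρ : Execution V P r) : ℕ :=
  ((Finset.range r).filter (fun i => ρ.ty i = StepType.comm)).card

/-- The total number of edge reconfigurations along an execution. -/
noncomputable def Execution.nbreconfig (ρ : Execution V P r) : ℕ :=
  ∑ i ∈ (Finset.range r).filter (fun i => ρ.ty i = StepType.reconf),
    dist (ρ.cfg i) (ρ.cfg (i + 1))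

/-- An execution is `k`-balanced if it starts and ends with a communication step
and `nbreconfig ρ ≤ k * (nbcomm ρ - 1)`. -/
def Execution.Balanced (k : ℕ) (ρ : Execution V P r) : Prop :=
  1 ≤ r ∧ ρ.ty 0 = StepType.comm ∧ ρ.ty (r - 1) = StepType.comm ∧
    ρ.nbreconfig ≤ k * (ρ.nbcomm - 1)

/-- Juxtaposition `G ⊕ H` of two configurations: disjoint union. -/
def Config.juxt {V W Q : Type} (G : Config V Q) (H : Config W Q) : Config (V ⊕ W) Q where
  graph := SimpleGraph.fromEdgeSet
    (Sym2.map Sum.inl '' G.graph.edgeSet ∪ Sym2.map Sum.inr '' H.graph.edgeSet)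
  label := Sum.elim G.label H.label

/-- `G ^ N`: juxtaposition of `N` disjoint copies of `G`. -/
def Config.pow {V Q : Type} (G : Config V Q) (N : ℕ) : Config (V × Fin N) Q where
  graph := SimpleGraph.fromEdgeSet
    (⋃ i : Fin N, Sym2.map (fun v => (v, i)) '' G.graph.edgeSet)
  label := fun p => G.label p.1

/-- Renaming the nodes of a configuration along a bijection. -/
def Config.rename {V W Q : Type} (e : V ≃ W) (G : Config V Q) : Config W Q where
  graph := SimpleGraph.comap e.symm G.graph
  label := G.label ∘ e.symm


/-- Overwrite the neighbourhood of `v` in `G` by `S`, leaving all edges not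
incident to `v` unchanged. -/
def overwrite {V : Type} (G : SimpleGraph V) (v : V) (S : Set V) : SimpleGraph V where
  Adj a b := (a = v ∧ b ∈ S ∧ b ≠ v) ∨ (b = v ∧ a ∈ S ∧ a ≠ v) ∨ (a ≠ v ∧ b ≠ v ∧ G.Adj a b)
  symm := by
    constructor
    intro a b h
    rcases h with ⟨h1, h2, h3⟩ | ⟨h1, h2, h3⟩ | ⟨h1, h2, h3⟩
    · exact Or.inr (Or.inl ⟨h1, h2, h3⟩)
    · exact Or.inl ⟨h1, h2, h3⟩
    · exact Or.inr (Or.inr ⟨h2, h1, h3.symm⟩)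
  loopless := by
    constructor
    intro a h
    rcases h with ⟨h1, h2, h3⟩ | ⟨h1, h2, h3⟩ | ⟨h1, h2, h3⟩
    · exact h3 h1
    · exact h3 h1
    · exact G.irrefl h3

lemma overwrite_adj_v {V : Type} (G : SimpleGraph V) (v : V) (S : Set V) (hv : v ∉ S)
    (u : V) : (overwrite G v S).Adj v u ↔ u ∈ S := by
  constructor
  · rintro (⟨_, h2, _⟩ | ⟨rfl, h2, _⟩ | ⟨h1, _, _⟩)
    · exact h2
    · exact h2
    · exact absurd rfl h1
  · intro hu
    exact Or.inl ⟨rfl, hu, fun h => hv (h ▸ hu)⟩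

lemma overwrite_adj_of_ne {V : Type} (G : SimpleGraph V) (v : V) (S : Set V)
    {a b : V} (ha : a ≠ v) (hb : b ≠ v) :
    (overwrite G v S).Adj a b ↔ G.Adj a b := by
  constructor
  · rintro (⟨h1, _, _⟩ | ⟨h1, _, _⟩ | ⟨_, _, h3⟩)
    · exact absurd h1 ha
    · exact absurd h1 hb
    · exact h3
  · intro h
    exact Or.inr (Or.inr ⟨ha, hb, h⟩)

lemma symmDiff_overwrite_subset {V : Type} (G : SimpleGraph V) (v : V) (S : Set V) :
    symmDiff G.edgeSet (overwrite G v S).edgeSet ⊆ (fun u => s(v, u)) '' Set.univ := by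
  intro e he
  induction e using Sym2.ind with
  | _ a b =>
    by_cases ha : a = v
    · exact ⟨b, trivial, by rw [ha]⟩
    by_cases hb : b = v
    · exact ⟨a, trivial, by rw [hb, Sym2.eq_swap]⟩
    · exfalso
      rw [Set.mem_symmDiff] at he
      have h := overwrite_adj_of_ne G v S ha hb
      simp only [SimpleGraph.mem_edgeSet] at he
      rcases he with ⟨h1, h2⟩ | ⟨h1, h2⟩
      · exact h2 (h.2 h1)
      · exact h2 (h.1 h1)

lemma dist_overwrite_le {V Q : Type} [Fintype V] (G : Config V Q) (v : V) (S : Set V)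
    (L : V → Q) : dist G ⟨overwrite G.graph v S, L⟩ ≤ Fintype.card V := by
  have h1 : (symmDiff G.graph.edgeSet (overwrite G.graph v S).edgeSet).ncard
      ≤ ((fun u => s(v, u)) '' Set.univ).ncard :=
    Set.ncard_le_ncard (symmDiff_overwrite_subset G.graph v S)
      (Set.finite_univ.image _)
  have h2 : ((fun u => s(v, u)) '' Set.univ).ncard ≤ (Set.univ : Set V).ncard :=
    Set.ncard_image_le Set.finite_univ
  have h3 : (Set.univ : Set V).ncard = Fintype.card V := by
    rw [Set.ncard_univ, Nat.card_eq_fintype_card]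
  exact le_trans (le_trans h1 h2) (le_of_eq h3)

/-- Key induction: there is an execution from the same start whose reconfiguration
steps each change at most `|V|` edges, which ends (if nonempty) with a communication
step, and whose last labelling equals that of `ρ.cfg n` pointwise. -/
lemma exists_good_execution {Q M V : Type} [Fintype V] (P : BroadcastProtocol Q M) :
    ∀ (n : ℕ) (ρ : Execution V P n),
    ∃ (m : ℕ) (ρ' : Execution V P m),
      ρ'.cfg 0 = ρ.cfg 0 ∧
      (∀ i < m, ρ'.ty i = StepType.reconf →
        dist (ρ'.cfg i) (ρ'.cfg (i + 1)) ≤ Fintype.card V) ∧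
      (1 ≤ m → ρ'.ty (m - 1) = StepType.comm) ∧
      (ρ'.cfg m).label = (ρ.cfg n).label := by
  intro n
  induction n with
  | zero =>
    intro ρ
    exact ⟨0, ⟨ρ.cfg, ρ.ty,
      fun i h => absurd h (Nat.not_lt_zero i),
      fun i h => absurd h (Nat.not_lt_zero i),
      fun i h => absurd h (Nat.not_lt_zero _)⟩,
      rfl, fun i h => absurd h (Nat.not_lt_zero i), fun h => absurd h (by omega), rfl⟩
  | succ n ih =>
    intro ρ
    obtain ⟨m, ρ', h0, hb, hl, hlab⟩ := ih
      ⟨ρ.cfg, ρ.ty,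
        fun i hi => ρ.step_comm i (Nat.lt_succ_of_lt hi),
        fun i hi => ρ.step_reconf i (Nat.lt_succ_of_lt hi),
        fun i hi => ρ.alternate i (Nat.lt_succ_of_lt hi)⟩
    have h0 : ρ'.cfg 0 = ρ.cfg 0 := h0
    have hlab : (ρ'.cfg m).label = (ρ.cfg n).label := hlab
    cases hty : ρ.ty n with
    | reconf =>
      have hstep : (ρ.cfg (n + 1)).label = (ρ.cfg n).label :=
        ρ.step_reconf n (Nat.lt_succ_self n) hty
      exact ⟨m, ρ', h0, hb, hl, by rw [hlab]; exact hstep.symm⟩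
    | comm =>
      obtain ⟨hE, v, msg, hbrd, hrcv, hkeep⟩ := ρ.step_comm n (Nat.lt_succ_self n) hty
      set S : Set V := (ρ.cfg n).graph.neighborSet v with hS
      have hvS : v ∉ S := by simp [hS]
      set G1 : Config V Q := ⟨overwrite (ρ'.cfg m).graph v S, (ρ'.cfg m).label⟩ with hG1
      set G2 : Config V Q := ⟨G1.graph, (ρ.cfg (n + 1)).label⟩ with hG2
      set cfg : ℕ → Config V Q :=
        fun i => if i ≤ m then ρ'.cfg i else if i = m + 1 then G1 else G2 with hcfg
      set ty : ℕ → StepType :=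
        fun i => if i < m then ρ'.ty i else if i = m then .reconf else .comm with hty'
      have hcfg_le : ∀ i, i ≤ m → cfg i = ρ'.cfg i := by
        intro i hi; simp [hcfg, hi]
      have hcfg1 : cfg (m + 1) = G1 := by simp [hcfg]
      have hcfg2 : cfg (m + 2) = G2 := by
        simp only [hcfg]
        rw [if_neg (by omega), if_neg (by omega)]
      have hty_lt : ∀ i, i < m → ty i = ρ'.ty i := by
        intro i hi; simp [hty', hi]
      have htym : ty m = .reconf := by simp [hty']
      have htym1 : ty (m + 1) = .comm := by
        simp only [hty']
        rw [if_neg (by omega), if_neg (by omega)]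
      -- the communication step at position m+1
      have hcomm : CommStep P G1 G2 := by
        refine ⟨rfl, v, msg, ?_, ?_, ?_⟩
        · show P.trans (G1.label v) (.brd msg) (G2.label v)
          have : G1.label v = (ρ.cfg n).label v := by rw [hG1]; exact congrFun hlab v
          rw [this]; exact hbrd
        · intro u hu
          have huS : u ∈ S := (overwrite_adj_v _ v S hvS u).1 hu
          have : G1.label u = (ρ.cfg n).label u := by rw [hG1]; exact congrFun hlab u
          rw [show G1.label u = (ρ.cfg n).label u from this]
          exact hrcv u huS
        · intro u hne hadj
          have huS : u ∉ S := fun h => hadj ((overwrite_adj_v _ v S hvS u).2 h)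
          have : (ρ.cfg (n + 1)).label u = (ρ.cfg n).label u := hkeep u hne huS
          show (ρ.cfg (n + 1)).label u = G1.label u
          rw [this, hG1]; exact (congrFun hlab u).symm
      refine ⟨m + 2, ⟨cfg, ty, ?_, ?_, ?_⟩, ?_, ?_, ?_, ?_⟩
      · -- step_comm
        intro i hi hc
        rcases lt_trichotomy i m with h | h | h
        · rw [hcfg_le i (by omega), hcfg_le (i + 1) (by omega)]
          exact ρ'.step_comm i h (by rw [← hty_lt i h]; exact hc)
        · exact absurd hc (by rw [h, htym]; simp)
        · have : i = m + 1 := by omega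
          rw [this, hcfg1, show m + 1 + 1 = m + 2 from rfl, hcfg2]
          exact hcomm
      · -- step_reconf
        intro i hi hc
        rcases lt_trichotomy i m with h | h | h
        · rw [hcfg_le i (by omega), hcfg_le (i + 1) (by omega)]
          exact ρ'.step_reconf i h (by rw [← hty_lt i h]; exact hc)
        · subst h
          rw [hcfg_le i le_rfl, hcfg1]
          exact rfl
        · have : i = m + 1 := by omega
          exact absurd hc (by rw [this, htym1]; simp)
      · -- alternate
        intro i hi
        rcases lt_trichotomy (i + 1) m with h | h | h
        · rw [hty_lt (i + 1) h, hty_lt i (by omega)]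
          exact ρ'.alternate i h
        · have him : i = m - 1 := by omega
          have hm1 : 1 ≤ m := by omega
          rw [h, htym, show i = m - 1 from him, hty_lt (m - 1) (by omega), hl hm1]
          simp
        · have : i = m := by omega
          rw [this, htym1, htym]
          simp
      · -- cfg 0 = ρ.cfg 0
        show cfg 0 = ρ.cfg 0
        rw [hcfg_le 0 (by omega)]
        exact h0
      · -- reconfiguration bound
        intro i hi hc
        have hc' : ty i = StepType.reconf := hc
        show dist (cfg i) (cfg (i + 1)) ≤ Fintype.card V
        rcases lt_trichotomy i m with h | h | h
        · rw [hcfg_le i (by omega), hcfg_le (i + 1) (by omega)]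
          exact hb i h (by rw [← hty_lt i h]; exact hc')
        · subst h
          rw [hcfg_le i le_rfl, hcfg1]
          exact dist_overwrite_le (ρ'.cfg i) v S _
        · have hi1 : i = m + 1 := by omega
          rw [hi1, htym1] at hc'
          exact absurd hc' (by simp)
      · -- last step is comm
        intro _
        show ty (m + 2 - 1) = StepType.comm
        rw [show m + 2 - 1 = m + 1 from rfl, htym1]
      · -- final labelling
        show (cfg (m + 2)).label = (ρ.cfg (n + 1)).label
        rw [hcfg2]

/-- From any execution `ρ = (G_i)_{0 ≤ i ≤ n}` starting in a
configuration `G_0` with `N₀` nodes, one can build an execution `ρ'` from the same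
configuration `G_0`, whose reconfiguration steps each change at most `N₀` edges,
whose last step (if any) is a communication step, and whose last configuration has,
for every state `q`, the same number of nodes labelled `q` as `G_n`. -/
theorem exists_idConstrained_execution_same_counts {Q M V : Type} [Finite Q] [Finite M]
    [Fintype V] (P : BroadcastProtocol Q M) {n : ℕ} (ρ : Execution V P n) :
    ∃ (m : ℕ) (ρ' : Execution V P m),
      ρ'.cfg 0 = ρ.cfg 0 ∧
      (∀ i < m, ρ'.ty i = StepType.reconf →
        dist (ρ'.cfg i) (ρ'.cfg (i + 1)) ≤ Fintype.card V) ∧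
      (1 ≤ m → ρ'.ty (m - 1) = StepType.comm) ∧
      (∀ q : Q, {v | (ρ'.cfg m).label v = q}.ncard = {v | (ρ.cfg n).label v = q}.ncard) := by
  obtain ⟨m, ρ', h0, hb, hl, hlab⟩ := exists_good_execution P n ρ
  exact ⟨m, ρ', h0, hb, hl, fun q => by rw [hlab]⟩

end RBN
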